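/- Let (x_n)_{n∈ℕ} be a sequence in H and μ a probability measure on H such that for every a ∈ H, the limit lim_{n→∞} exp(i⟨a,x_n⟩) exists and equals charFun μ (a). Then there exists x ∈ H such that ⟨a,x_n⟩ → ⟨a,x⟩ for every a ∈ H (i.e. x_n converges weakly to x), and μ is the Dirac measure δ_x. -/

import Mathlib

open MeasureTheory Complex Filter
open scoped RealInnerProductSpace Topology

section helpers

lemma eq_of_forall_exp_eq {c c' : ℝ}
    (h : ∀ t : ℝ, Complex.exp (((t * c : ℝ) : ℂ) * I) = Complex.exp (((t * c' : ℝ) : ℂ) * I)) :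
    c = c' := by
  by_contra hne
  have hd : c - c' ≠ 0 := sub_ne_zero.mpr hne
  set t : ℝ := Real.pi / (c - c') with ht
  have key := h t
  rw [Complex.exp_eq_exp_iff_exp_sub_eq_one] at key
  have h2 : ((t * c : ℝ) : ℂ) * I - ((t * c' : ℝ) : ℂ) * I = (Real.pi : ℂ) * I := by
    have : t * c - t * c' = Real.pi := by
      rw [ht]; field_simp
    rw [← sub_mul]
    norm_cast
    rw [this]
  rw [h2, Complex.exp_pi_mul_I] at key
  norm_num at key

lemma norm_int_exp_le {s : ℝ} (hs : s ≠ 0) (T : ℝ) :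
    ‖∫ t in (0:ℝ)..T, Complex.exp (((t * s : ℝ) : ℂ) * I)‖ ≤ 2 / |s| := by
  have hcast : ∀ t : ℝ, (((t * s : ℝ) : ℂ) * I) = ((s : ℂ) * I) * (t : ℂ) := by
    intro t; push_cast; ring
  have hc : (s : ℂ) * I ≠ 0 := by simp [hs, Complex.I_ne_zero]
  have : (∫ t in (0:ℝ)..T, Complex.exp (((t * s : ℝ) : ℂ) * I))
      = (Complex.exp ((s : ℂ) * I * T) - 1) / ((s : ℂ) * I) := by
    simp_rw [hcast]
    rw [integral_exp_mul_complex hc]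
    norm_num
  rw [this]
  rw [norm_div]
  have h1 : ‖Complex.exp ((s : ℂ) * I * T) - 1‖ ≤ 2 := by
    calc ‖Complex.exp ((s : ℂ) * I * T) - 1‖ ≤ ‖Complex.exp ((s : ℂ) * I * T)‖ + ‖(1:ℂ)‖ :=
          norm_sub_le _ _
    _ ≤ 2 := by
        have : (s : ℂ) * I * T = ((T * s : ℝ) : ℂ) * I := by push_cast; ring
        rw [this]
        rw [Complex.norm_exp_ofReal_mul_I]
        norm_num
  have h2 : ‖(s : ℂ) * I‖ = |s| := by
    simp
  rw [h2]
  gcongr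

lemma exists_tendsto_of_exp_tendsto (s : ℕ → ℝ) (f : ℝ → ℂ)
    (hf : ∀ t : ℝ, Tendsto (fun n => Complex.exp (((t * s n : ℝ) : ℂ) * I)) atTop (𝓝 (f t)))
    (hfc : ContinuousAt f 0) :
    ∃ c : ℝ, Tendsto s atTop (𝓝 c) := by
  -- f 0 = 1
  have f0 : f 0 = 1 := by
    have h0 := hf 0
    simp only [zero_mul, Complex.ofReal_zero, Complex.exp_zero] at h0
    exact (tendsto_nhds_unique h0 tendsto_const_nhds)
  -- re f ≥ 1/2 near 0
  have hre : Tendsto (fun t => (f t).re) (𝓝 0) (𝓝 1) := by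
    have := (Complex.continuous_re.tendsto (f 0)).comp hfc
    rwa [f0] at this
  have hev : ∀ᶠ t in 𝓝 (0:ℝ), (1:ℝ)/2 < (f t).re :=
    hre.eventually (eventually_gt_nhds (by norm_num))
  obtain ⟨ε, hε, hball⟩ := Metric.eventually_nhds_iff.mp hev
  set T : ℝ := ε / 2 with hTdef
  have hT0 : 0 < T := by positivity
  have hTre : ∀ t ∈ Set.Ioc (0:ℝ) T, (1:ℝ)/2 ≤ (f t).re := by
    intro t ht
    refine (hball ?_).le
    rw [Real.dist_eq, sub_zero, abs_of_pos ht.1]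
    calc t ≤ T := ht.2
    _ < ε := by rw [hTdef]; linarith
  -- f measurable
  have hfm : AEStronglyMeasurable f (volume : Measure ℝ) := by
    refine aestronglyMeasurable_of_tendsto_ae atTop
      (fun n => ?_) (Filter.Eventually.of_forall (fun t => hf t))
    exact (Complex.continuous_exp.comp
      ((Complex.continuous_ofReal.comp (continuous_id.mul continuous_const)).mul
        continuous_const)).aestronglyMeasurable
  have hfnorm : ∀ t : ℝ, ‖f t‖ = 1 := by
    intro t
    have hn := (hf t).norm
    simp only [Complex.norm_exp_ofReal_mul_I] at hn
    exact tendsto_nhds_unique hn tendsto_const_nhds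
  -- integrability of f on [0, T]
  have hfint : IntervalIntegrable f volume 0 T := by
    rw [intervalIntegrable_iff]
    have hvol : volume (Set.uIoc (0:ℝ) T) < ⊤ := by
      rw [Set.uIoc_eq_union]
      refine lt_of_le_of_lt (measure_union_le _ _) ?_
      rw [Real.volume_Ioc, Real.volume_Ioc]
      exact ENNReal.add_lt_top.mpr ⟨ENNReal.ofReal_lt_top, ENNReal.ofReal_lt_top⟩
    refine Integrable.mono' (integrableOn_const (C := (1:ℝ)) hvol.ne) hfm.restrict
      (Filter.Eventually.of_forall fun t => (hfnorm t).le)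
  -- dominated convergence
  have hDCT : Tendsto (fun n => ∫ t in (0:ℝ)..T, Complex.exp (((t * s n : ℝ) : ℂ) * I)) atTop
      (𝓝 (∫ t in (0:ℝ)..T, f t)) := by
    refine intervalIntegral.tendsto_integral_filter_of_dominated_convergence
      (fun _ => 1) ?_ ?_ ?_ ?_
    · refine Filter.Eventually.of_forall fun n => ?_
      exact (Complex.continuous_exp.comp
        ((Complex.continuous_ofReal.comp (continuous_id.mul continuous_const)).mul
          continuous_const)).aestronglyMeasurable
    · refine Filter.Eventually.of_forall fun n => Filter.Eventually.of_forall fun t _ => ?_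
      rw [show ((↑(t * s n) : ℂ)) * I = ((t * s n : ℝ):ℂ) * I from rfl,
        Complex.norm_exp_ofReal_mul_I]
    · exact intervalIntegrable_const
    · exact Filter.Eventually.of_forall fun t _ => hf t
  -- lower bound for the limit integral
  have hintlow : T / 2 ≤ ‖∫ t in (0:ℝ)..T, f t‖ := by
    have hIoc : (∫ t in (0:ℝ)..T, f t) = ∫ t in Set.Ioc (0:ℝ) T, f t := by
      rw [intervalIntegral.integral_of_le hT0.le]
    have hreint : (1:ℝ)/2 * (volume (Set.Ioc (0:ℝ) T)).toReal
        ≤ ∫ t in Set.Ioc (0:ℝ) T, (f t).re := by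
      refine setIntegral_ge_of_const_le_real measurableSet_Ioc (by simp) hTre ?_
      have : IntegrableOn f (Set.Ioc (0:ℝ) T) volume := by
        rw [intervalIntegrable_iff_integrableOn_Ioc_of_le hT0.le] at hfint
        exact hfint
      exact this.re
    have hvol : (volume (Set.Ioc (0:ℝ) T)).toReal = T := by
      simp [hT0.le]
    rw [hvol] at hreint
    have hfor : IntegrableOn f (Set.Ioc (0:ℝ) T) volume := by
      rw [intervalIntegrable_iff_integrableOn_Ioc_of_le hT0.le] at hfint
      exact hfint
    have hreeq : (∫ t in Set.Ioc (0:ℝ) T, (f t).re)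
        = (∫ t in Set.Ioc (0:ℝ) T, f t).re := by
      exact integral_re hfor
    calc T / 2 = 1/2 * T := by ring
    _ ≤ (∫ t in Set.Ioc (0:ℝ) T, f t).re := by rw [← hreeq]; exact hreint
    _ ≤ |(∫ t in Set.Ioc (0:ℝ) T, f t).re| := le_abs_self _
    _ ≤ ‖∫ t in Set.Ioc (0:ℝ) T, f t‖ := Complex.abs_re_le_norm _
    _ = ‖∫ t in (0:ℝ)..T, f t‖ := by rw [hIoc]
  -- eventual bound on |s n|
  have hlt : T / 4 < ‖∫ t in (0:ℝ)..T, f t‖ := lt_of_lt_of_le (by linarith) hintlow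
  have hevn : ∀ᶠ n in atTop,
      T / 4 < ‖∫ t in (0:ℝ)..T, Complex.exp (((t * s n : ℝ) : ℂ) * I)‖ :=
    hDCT.norm.eventually (eventually_gt_nhds hlt)
  have hbnd : ∀ᶠ n in atTop, |s n| ≤ 8 / T := by
    filter_upwards [hevn] with n hn
    rcases eq_or_ne (s n) 0 with h0 | h0
    · rw [h0]; simp; positivity
    · have h2 := norm_int_exp_le h0 T
      have : T / 4 < 2 / |s n| := lt_of_lt_of_le hn h2
      have habs : 0 < |s n| := abs_pos.mpr h0
      rw [div_lt_div_iff₀ (by norm_num) habs] at this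
      rw [le_div_iff₀ hT0]
      nlinarith
  obtain ⟨N, hN⟩ := eventually_atTop.mp hbnd
  set M : ℝ := 8 / T + ∑ k ∈ Finset.range (N + 1), |s k| with hM
  have hMb : ∀ n, |s n| ≤ M := by
    intro n
    rcases le_or_gt N n with hn | hn
    · have : (0:ℝ) ≤ ∑ k ∈ Finset.range (N + 1), |s k| :=
        Finset.sum_nonneg fun _ _ => abs_nonneg _
      calc |s n| ≤ 8 / T := hN n hn
      _ ≤ M := by rw [hM]; linarith
    · have hmem : n ∈ Finset.range (N + 1) := Finset.mem_range.mpr (by omega)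
      have : |s n| ≤ ∑ k ∈ Finset.range (N + 1), |s k| :=
        Finset.single_le_sum (f := fun k => |s k|) (fun _ _ => abs_nonneg _) hmem
      have h8 : (0:ℝ) ≤ 8 / T := by positivity
      rw [hM]; linarith
  have hmemIcc : ∀ n, s n ∈ Set.Icc (-M) M := fun n => abs_le.mp (hMb n)
  obtain ⟨c, -, φ, hφ, hconv⟩ :=
    tendsto_subseq_of_bounded (Metric.isBounded_Icc (-M) M) hmemIcc
  have hc : ∀ t : ℝ, Complex.exp (((t * c : ℝ) : ℂ) * I) = f t := by
    intro t
    have h1 : Tendsto (fun k => Complex.exp (((t * s (φ k) : ℝ) : ℂ) * I)) atTop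
        (𝓝 (Complex.exp (((t * c : ℝ) : ℂ) * I))) := by
      refine (Complex.continuous_exp.tendsto _).comp ?_
      exact (Complex.continuous_ofReal.tendsto _).comp
        ((continuous_const.mul continuous_id).tendsto c |>.comp hconv) |>.mul tendsto_const_nhds
    have h2 : Tendsto (fun k => Complex.exp (((t * s (φ k) : ℝ) : ℂ) * I)) atTop (𝓝 (f t)) :=
      (hf t).comp hφ.tendsto_atTop
    exact tendsto_nhds_unique h1 h2
  refine ⟨c, tendsto_of_subseq_tendsto fun ns hns => ?_⟩
  obtain ⟨c', -, ψ, hψ, hconv'⟩ :=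
    tendsto_subseq_of_bounded (Metric.isBounded_Icc (-M) M) (fun k => hmemIcc (ns k))
  have hc' : ∀ t : ℝ, Complex.exp (((t * c' : ℝ) : ℂ) * I) = f t := by
    intro t
    have h1 : Tendsto (fun k => Complex.exp (((t * s (ns (ψ k)) : ℝ) : ℂ) * I)) atTop
        (𝓝 (Complex.exp (((t * c' : ℝ) : ℂ) * I))) := by
      refine (Complex.continuous_exp.tendsto _).comp ?_
      exact (Complex.continuous_ofReal.tendsto _).comp
        ((continuous_const.mul continuous_id).tendsto c' |>.comp hconv') |>.mul tendsto_const_nhds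
    have h2 : Tendsto (fun k => Complex.exp (((t * s (ns (ψ k)) : ℝ) : ℂ) * I)) atTop (𝓝 (f t)) :=
      (hf t).comp (hns.comp hψ.tendsto_atTop)
    exact tendsto_nhds_unique h1 h2
  have : c' = c := eq_of_forall_exp_eq (fun t => (hc' t).trans (hc t).symm)
  exact ⟨ψ, this ▸ hconv'⟩

end helpers

noncomputable def charFun_H {H : Type*} [NormedAddCommGroup H] [InnerProductSpace ℝ H]
    [MeasurableSpace H] (μ : Measure H) (a : H) : ℂ :=
  ∫ x, Complex.exp ((⟪a, x⟫ : ℂ) * Complex.I) ∂μ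

theorem stmt8
    {H : Type*} [NormedAddCommGroup H] [InnerProductSpace ℝ H] [CompleteSpace H]
    [TopologicalSpace.SeparableSpace H] [MeasurableSpace H] [BorelSpace H]
    (x : ℕ → H) (μ : Measure H) [IsProbabilityMeasure μ]
    (h : ∀ a : H,
      Tendsto (fun n => Complex.exp ((⟪a, x n⟫ : ℂ) * Complex.I)) atTop (𝓝 (charFun_H μ a))) :
    ∃ ξ : H, (∀ a : H, Tendsto (fun n => ⟪a, x n⟫) atTop (𝓝 ⟪a, ξ⟫)) ∧
      μ = Measure.dirac ξ := by
  -- continuity of the inner-product integrand in x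
  have hmeas : ∀ a : H, AEStronglyMeasurable
      (fun y : H => Complex.exp ((⟪a, y⟫ : ℂ) * Complex.I)) μ := by
    intro a
    exact (Complex.continuous_exp.comp
      ((Complex.continuous_ofReal.comp (continuous_const.inner continuous_id)).mul
        continuous_const)).aestronglyMeasurable
  -- convergence of ⟪a, x n⟫ for every a
  have hex : ∀ a : H, ∃ c : ℝ, Tendsto (fun n => ⟪a, x n⟫) atTop (𝓝 c) := by
    intro a
    refine exists_tendsto_of_exp_tendsto _ (fun t => charFun_H μ (t • a)) ?_ ?_
    · intro t
      have := h (t • a)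
      simpa only [real_inner_smul_left] using this
    · -- continuity at 0 of t ↦ charFun_H μ (t • a)
      have key : Tendsto (fun t : ℝ => charFun_H μ (t • a)) (𝓝 0)
          (𝓝 (charFun_H μ ((0:ℝ) • a))) := by
        unfold charFun_H
        refine tendsto_integral_filter_of_dominated_convergence (fun _ => 1)
          (Filter.Eventually.of_forall fun t => hmeas _)
          (Filter.Eventually.of_forall fun t => Filter.Eventually.of_forall fun y => ?_)
          (integrable_const 1)
          (Filter.Eventually.of_forall fun y => ?_)
        · rw [Complex.norm_exp_ofReal_mul_I]
        · refine (Complex.continuous_exp.tendsto _).comp ?_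
          refine Tendsto.mul_const _ ?_
          refine (Complex.continuous_ofReal.tendsto _).comp ?_
          have : Continuous fun t : ℝ => ⟪t • a, y⟫ := by
            simp_rw [real_inner_smul_left]
            exact continuous_id.mul continuous_const
          exact this.tendsto 0
      exact key
  choose c hc using hex
  -- build the limit functional
  let g : ℕ → H →L[ℝ] ℝ := fun n => innerSL ℝ (x n)
  have hg : Tendsto (fun n a => g n a) atTop (𝓝 c) := by
    rw [tendsto_pi_nhds]
    intro a
    simpa [g, real_inner_comm] using hc a
  let L : H →L[ℝ] ℝ := continuousLinearMapOfTendsto g hg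
  have hL : ∀ a, L a = c a := fun a => rfl
  set ξ : H := (InnerProductSpace.toDual ℝ H).symm L with hξ
  have hξa : ∀ a : H, ⟪a, ξ⟫ = c a := by
    intro a
    rw [real_inner_comm, hξ, InnerProductSpace.toDual_symm_apply]
    exact hL a
  have part1 : ∀ a : H, Tendsto (fun n => ⟪a, x n⟫) atTop (𝓝 ⟪a, ξ⟫) := by
    intro a; rw [hξa]; exact hc a
  refine ⟨ξ, part1, ?_⟩
  -- charFun_H μ a = exp(i⟪a,ξ⟫)
  have hchar : ∀ a : H, charFun_H μ a = Complex.exp ((⟪a, ξ⟫ : ℂ) * Complex.I) := by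
    intro a
    refine tendsto_nhds_unique (h a) ?_
    refine (Complex.continuous_exp.tendsto _).comp ?_
    exact Tendsto.mul_const _ ((Complex.continuous_ofReal.tendsto _).comp (part1 a))
  -- cos of difference is 1 a.e.
  have hcos : ∀ a : H, ∀ᵐ y ∂μ, Real.cos (⟪a, y⟫ - ⟪a, ξ⟫) = 1 := by
    intro a
    have hI1 : ∫ y, Complex.exp (((⟪a, y⟫ - ⟪a, ξ⟫ : ℝ) : ℂ) * Complex.I) ∂μ = 1 := by
      have heq : ∀ y : H, Complex.exp (((⟪a, y⟫ - ⟪a, ξ⟫ : ℝ) : ℂ) * Complex.I)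
          = Complex.exp ((⟪a, y⟫ : ℂ) * Complex.I) * Complex.exp (-((⟪a, ξ⟫ : ℂ) * Complex.I)) := by
        intro y
        rw [← Complex.exp_add]
        congr 1
        push_cast
        ring
      simp_rw [heq]
      rw [integral_mul_const]
      have := hchar a
      unfold charFun_H at this
      rw [this, ← Complex.exp_add]
      simp
    have hgint : Integrable (fun y : H => Complex.exp (((⟪a, y⟫ - ⟪a, ξ⟫ : ℝ) : ℂ) * Complex.I)) μ := by
      refine Integrable.mono' (integrable_const 1) ?_
        (Filter.Eventually.of_forall fun y => ?_)
      · exact (Complex.continuous_exp.comp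
          ((Complex.continuous_ofReal.comp
            ((continuous_const.inner continuous_id).sub continuous_const)).mul
            continuous_const)).aestronglyMeasurable
      · rw [Complex.norm_exp_ofReal_mul_I]
    have hre : ∫ y, Real.cos (⟪a, y⟫ - ⟪a, ξ⟫) ∂μ = 1 := by
      have h1 : ∫ y, (Complex.exp (((⟪a, y⟫ - ⟪a, ξ⟫ : ℝ) : ℂ) * Complex.I)).re ∂μ
          = (∫ y, Complex.exp (((⟪a, y⟫ - ⟪a, ξ⟫ : ℝ) : ℂ) * Complex.I) ∂μ).re :=
        integral_re hgint
      rw [hI1] at h1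
      simp only [Complex.exp_ofReal_mul_I_re] at h1
      simpa using h1
    have hone : ∫ _ : H, (1:ℝ) ∂μ = 1 := by simp
    have hsub : ∫ y, (1 - Real.cos (⟪a, y⟫ - ⟪a, ξ⟫)) ∂μ = 0 := by
      rw [integral_sub (integrable_const 1) ?_]
      · rw [hone, hre]; ring
      · refine Integrable.mono' (integrable_const 1) ?_
          (Filter.Eventually.of_forall fun y => ?_)
        · exact (Real.continuous_cos.comp
            ((continuous_const.inner continuous_id).sub continuous_const)).aestronglyMeasurable
        · rw [Real.norm_eq_abs]
          exact Real.abs_cos_le_one _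
    have hnn : 0 ≤ᵐ[μ] fun y => 1 - Real.cos (⟪a, y⟫ - ⟪a, ξ⟫) :=
      Filter.Eventually.of_forall fun y => by
        simp only [Pi.zero_apply]
        have := Real.cos_le_one (⟪a, y⟫ - ⟪a, ξ⟫); linarith
    have hint2 : Integrable (fun y => 1 - Real.cos (⟪a, y⟫ - ⟪a, ξ⟫)) μ := by
      refine Integrable.sub (integrable_const 1) ?_
      refine Integrable.mono' (integrable_const 1) ?_
        (Filter.Eventually.of_forall fun y => ?_)
      · exact (Real.continuous_cos.comp
          ((continuous_const.inner continuous_id).sub continuous_const)).aestronglyMeasurable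
      · rw [Real.norm_eq_abs]; exact Real.abs_cos_le_one _
    have := (integral_eq_zero_iff_of_nonneg_ae hnn hint2).mp hsub
    filter_upwards [this] with y hy
    have : (1:ℝ) - Real.cos (⟪a, y⟫ - ⟪a, ξ⟫) = 0 := hy
    linarith
  -- inner products agree a.e.
  have haeq : ∀ a : H, ∀ᵐ y ∂μ, ⟪a, y⟫ = ⟪a, ξ⟫ := by
    intro a
    have hq : ∀ᵐ y ∂μ, ∀ q : ℚ, Real.cos ((q:ℝ) * (⟪a, y⟫ - ⟪a, ξ⟫)) = 1 := by
      rw [ae_all_iff]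
      intro q
      have := hcos ((q:ℝ) • a)
      filter_upwards [this] with y hy
      rw [real_inner_smul_left, real_inner_smul_left, ← mul_sub] at hy
      exact hy
    filter_upwards [hq] with y hy
    by_contra hne
    set r : ℝ := ⟪a, y⟫ - ⟪a, ξ⟫ with hr
    have hr0 : r ≠ 0 := sub_ne_zero.mpr hne
    have hpos : (0:ℝ) < 2 * Real.pi / |r| := by
      have := Real.pi_pos; positivity
    obtain ⟨q, hq0, hq2⟩ := exists_rat_btwn hpos
    have hq0' : (0:ℝ) < q := hq0
    have habs : |(q:ℝ) * r| < 2 * Real.pi := by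
      rw [abs_mul, abs_of_pos hq0']
      rw [lt_div_iff₀ (abs_pos.mpr hr0)] at hq2
      exact hq2
    have := (Real.cos_eq_one_iff_of_lt_of_lt (neg_lt_of_abs_lt habs)
      (lt_of_abs_lt habs)).mp (hy q)
    have : (q:ℝ) * r = 0 := this
    rcases mul_eq_zero.mp this with h1 | h1
    · exact absurd h1 (ne_of_gt hq0')
    · exact hr0 h1
  -- a.e. y = ξ
  obtain ⟨u, hu⟩ := TopologicalSpace.exists_dense_seq H
  have hae : ∀ᵐ y ∂μ, y = ξ := by
    have hall : ∀ᵐ y ∂μ, ∀ k : ℕ, ⟪u k, y⟫ = ⟪u k, ξ⟫ := ae_all_iff.mpr fun k => haeq (u k)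
    filter_upwards [hall] with y hy
    have heq : (fun a : H => ⟪a, y⟫) = fun a : H => ⟪a, ξ⟫ := by
      refine Continuous.ext_on hu ?_ ?_ ?_
      · exact continuous_id.inner continuous_const
      · exact continuous_id.inner continuous_const
      · rintro _ ⟨k, rfl⟩
        exact hy k
    have := congrFun heq (y - ξ)
    rw [← sub_eq_zero, ← inner_sub_right] at this
    · exact sub_eq_zero.mp ((inner_self_eq_zero (𝕜 := ℝ)).mp this)
  -- conclude μ = dirac ξ
  have hmapeq : (fun y : H => y) =ᵐ[μ] fun _ => ξ := hae
  calc μ = μ.map id := (Measure.map_id).symm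
  _ = μ.map (fun _ => ξ) := Measure.map_congr hmapeq
  _ = (μ Set.univ) • Measure.dirac ξ := Measure.map_const μ ξ
  _ = Measure.dirac ξ := by simp
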